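/- Let T > 0 and let u : ℝ × [0,T) → ℝ be a classical periodic solution of the Fornberg–Whitham equation such that, in addition, ∂_x² u and ∂_t ∂_x u exist and are continuous on ℝ × [0,T). Set m₁(t) := min_{x∈[0,1]} ∂_x u(x,t) and m₂(t) := max_{x∈[0,1]} ∂_x u(x,t). Then m₁ and m₂ are locally Lipschitz on [0,T), and for almost every t ∈ (0,T) they are differentiable at t with m₁'(t) ≤ -(3/2) m₁(t)² + (m₂(t) - m₁(t))/2 and m₂'(t) ≤ -(3/2) m₂(t)² + (m₂(t) - m₁(t))/2. -/

import Mathlib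

open MeasureTheory
open Set Filter

/-- The 1-periodic convolution kernel of `(id - ∂ₓ²)⁻¹` on the circle, on `[0,1)`. -/
noncomputable def FWKernel (y : ℝ) : ℝ :=
  (Real.exp y + Real.exp (1 - y)) / (2 * (Real.exp 1 - 1))

section FWHelpers

noncomputable def FWKernel' (y : ℝ) : ℝ :=
  (Real.exp y - Real.exp (1 - y)) / (2 * (Real.exp 1 - 1))

lemma fw_exp_pos : (0:ℝ) < 2 * (Real.exp 1 - 1) := by
  have h := Real.add_one_le_exp (1:ℝ)
  linarith

lemma fwKernel_hasDerivAt (y : ℝ) : HasDerivAt FWKernel (FWKernel' y) y := by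
  have h1 : HasDerivAt (fun z : ℝ => Real.exp z) (Real.exp y) y := Real.hasDerivAt_exp y
  have h2 : HasDerivAt (fun z : ℝ => Real.exp (1 - z)) (-Real.exp (1 - y)) y := by
    have := (Real.hasDerivAt_exp (1 - y)).comp y ((hasDerivAt_id y).const_sub 1)
    simpa [Function.comp_def] using this
  have h3 : FWKernel' y = (Real.exp y + -Real.exp (1 - y)) / (2 * (Real.exp 1 - 1)) := by
    unfold FWKernel'; ring
  rw [h3]
  exact (h1.add h2).div_const _

lemma fwKernel_continuous : Continuous FWKernel := by
  unfold FWKernel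
  exact ((Real.continuous_exp).add (Real.continuous_exp.comp (continuous_const.sub continuous_id))).div_const _

lemma fwKernel'_continuous : Continuous FWKernel' := by
  unfold FWKernel'
  exact ((Real.continuous_exp).sub (Real.continuous_exp.comp (continuous_const.sub continuous_id))).div_const _

lemma fwKernel'_nonpos {y : ℝ} (h : y ≤ 1/2) : FWKernel' y ≤ 0 := by
  unfold FWKernel'
  apply div_nonpos_of_nonpos_of_nonneg
  · have : Real.exp y ≤ Real.exp (1 - y) := Real.exp_le_exp.2 (by linarith)
    linarith
  · linarith [fw_exp_pos]

lemma fwKernel'_nonneg {y : ℝ} (h : 1/2 ≤ y) : 0 ≤ FWKernel' y := by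
  unfold FWKernel'
  apply div_nonneg
  · have : Real.exp (1 - y) ≤ Real.exp y := Real.exp_le_exp.2 (by linarith)
    linarith
  · linarith [fw_exp_pos]

lemma fwKernel_one_eq_zero : FWKernel 1 = FWKernel 0 := by
  unfold FWKernel
  rw [show (1:ℝ) - 1 = 0 by ring, show (1:ℝ) - 0 = 1 by ring, add_comm]

lemma fwKernel_c_nonneg : 0 ≤ FWKernel 1 - FWKernel (1/2) := by
  unfold FWKernel
  rw [div_sub_div_same]
  apply div_nonneg _ (le_of_lt fw_exp_pos)
  have hs : Real.exp (1/2) * Real.exp (1/2) = Real.exp 1 := by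
    rw [← Real.exp_add]; norm_num
  have h1 : (1:ℝ) ≤ Real.exp (1/2) := Real.one_le_exp (by norm_num)
  norm_num
  nlinarith [hs, h1]

lemma fwKernel_c_le_half : FWKernel 1 - FWKernel (1/2) ≤ 1/2 := by
  unfold FWKernel
  rw [div_sub_div_same, div_le_iff₀ fw_exp_pos]
  have hs : Real.exp (1/2) * Real.exp (1/2) = Real.exp 1 := by
    rw [← Real.exp_add]; norm_num
  have h1 : (1:ℝ) ≤ Real.exp (1/2) := Real.one_le_exp (by norm_num)
  norm_num
  nlinarith [hs, h1]
open Set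

lemma mvt_uIcc (f f' : ℝ → ℝ) (a b : ℝ)
    (hd : ∀ x ∈ Set.uIcc a b, HasDerivAt f (f' x) x) :
    ∃ c ∈ Set.uIcc a b, f b - f a = f' c * (b - a) := by
  rcases lt_trichotomy a b with h | h | h
  · have hc : ContinuousOn f (Set.Icc a b) := fun x hx =>
      (hd x (by rwa [Set.uIcc_of_le h.le])).continuousAt.continuousWithinAt
    obtain ⟨c, hc1, hc2⟩ := exists_hasDerivAt_eq_slope f f' h hc
      (fun x hx => hd x (by rw [Set.uIcc_of_le h.le]; exact Set.Ioo_subset_Icc_self hx))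
    refine ⟨c, by rw [Set.uIcc_of_le h.le]; exact Set.Ioo_subset_Icc_self hc1, ?_⟩
    rw [hc2, div_mul_cancel₀ _ (by linarith : b - a ≠ 0)]
  · exact ⟨a, Set.left_mem_uIcc, by rw [h]; ring⟩
  · have hc : ContinuousOn f (Set.Icc b a) := fun x hx =>
      (hd x (by rwa [Set.uIcc_of_ge h.le])).continuousAt.continuousWithinAt
    obtain ⟨c, hc1, hc2⟩ := exists_hasDerivAt_eq_slope f f' h hc
      (fun x hx => hd x (by rw [Set.uIcc_of_ge h.le]; exact Set.Ioo_subset_Icc_self hx))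
    refine ⟨c, by rw [Set.uIcc_of_ge h.le]; exact Set.Ioo_subset_Icc_self hc1, ?_⟩
    rw [show f b - f a = -(f a - f b) by ring, hc2, div_mul_eq_mul_div,
      neg_eq_iff_eq_neg, eq_comm, neg_eq_iff_eq_neg, div_eq_iff (by linarith : a - b ≠ 0)]
    ring

lemma deriv_nonneg_of_right_nonneg {f : ℝ → ℝ} {d t : ℝ} (hf : HasDerivAt f d t)
    (h0 : f t = 0) (hnn : ∀ᶠ s in nhdsWithin t (Set.Ioi t), 0 ≤ f s) : 0 ≤ d := by
  have h := (hf.hasDerivWithinAt (s := Set.Ioi t))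
  rw [hasDerivWithinAt_iff_tendsto_slope] at h
  have hset : Set.Ioi t \ {t} = Set.Ioi t := by
    ext x; simp only [Set.mem_diff, Set.mem_Ioi, Set.mem_singleton_iff]
    exact ⟨fun h => h.1, fun h => ⟨h, ne_of_gt h⟩⟩
  rw [hset] at h
  refine ge_of_tendsto h ?_
  filter_upwards [hnn, self_mem_nhdsWithin] with s hs hs'
  rw [slope_def_field, h0, sub_zero]
  have h1 : (0:ℝ) < s - t := by simp at hs'; linarith
  exact div_nonneg hs h1.le

lemma deriv_nonneg_of_left_nonpos {f : ℝ → ℝ} {d t : ℝ} (hf : HasDerivAt f d t)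
    (h0 : f t = 0) (hnp : ∀ᶠ s in nhdsWithin t (Set.Iio t), f s ≤ 0) : 0 ≤ d := by
  have h := (hf.hasDerivWithinAt (s := Set.Iio t))
  rw [hasDerivWithinAt_iff_tendsto_slope] at h
  have hset : Set.Iio t \ {t} = Set.Iio t := by
    ext x; simp only [Set.mem_diff, Set.mem_Iio, Set.mem_singleton_iff]
    exact ⟨fun h => h.1, fun h => ⟨h, ne_of_lt h⟩⟩
  rw [hset] at h
  refine ge_of_tendsto h ?_
  filter_upwards [hnp, self_mem_nhdsWithin] with s hs hs'
  rw [slope_def_field, h0, sub_zero]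
  have h1 : s - t < 0 := by simp at hs'; linarith
  have := div_nonneg (neg_nonneg.2 hs) (neg_nonneg.2 h1.le)
  rwa [neg_div_neg_eq] at this
lemma schwarz_mixed {f fx ftx : ℝ → ℝ → ℝ} {ft : ℝ → ℝ} {ξ t δ A : ℝ} (hδ : 0 < δ)
    (hx : ∀ x : ℝ, ∀ s ∈ Set.Ioo (t - δ) (t + δ), HasDerivAt (fun x' => f x' s) (fx x s) x)
    (htd : ∀ x : ℝ, ∀ s ∈ Set.Ioo (t - δ) (t + δ), HasDerivAt (fun σ => fx x σ) (ftx x s) s)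
    (hcont : ContinuousAt (fun p : ℝ × ℝ => ftx p.1 p.2) (ξ, t))
    (hft : ∀ x : ℝ, HasDerivAt (fun σ => f x σ) (ft x) t)
    (hA : HasDerivAt ft A ξ) :
    A = ftx ξ t := by
  by_contra hne
  set ε := |A - ftx ξ t| / 2 with hεdef
  have hε : 0 < ε := by
    have : A - ftx ξ t ≠ 0 := sub_ne_zero.2 hne
    have := abs_pos.2 this
    positivity
  obtain ⟨r', hr', hcont'⟩ := Metric.continuousAt_iff.1 hcont ε hε
  set r := min r' δ with hrdef
  have hr : 0 < r := lt_min hr' hδ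
  have hrδ : r ≤ δ := min_le_right _ _
  have hrr' : r ≤ r' := min_le_left _ _
  have htmem : t ∈ Set.Ioo (t - δ) (t + δ) := by constructor <;> linarith
  -- Main claim
  have key : ∀ h : ℝ, h ≠ 0 → |h| < r → |ft (ξ + h) - ft ξ - ftx ξ t * h| ≤ ε * |h| := by
    intro h hh hhr
    -- the double difference as a function of k
    set G : ℝ → ℝ := fun k => f (ξ + h) (t + k) - f ξ (t + k) with hGdef
    have hshift : HasDerivAt (fun k : ℝ => t + k) 1 0 := by
      simpa using (hasDerivAt_id (0:ℝ)).const_add t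
    have hG : HasDerivAt G (ft (ξ + h) - ft ξ) 0 := by
      have ha : HasDerivAt (fun σ => f (ξ + h) σ) (ft (ξ + h)) (t + 0) := by
        simpa using hft (ξ + h)
      have hb : HasDerivAt (fun σ => f ξ σ) (ft ξ) (t + 0) := by
        simpa using hft ξ
      have h1 : HasDerivAt (fun k : ℝ => f (ξ + h) (t + k)) (ft (ξ + h)) 0 := by
        simpa [Function.comp_def] using ha.comp 0 hshift
      have h2 : HasDerivAt (fun k : ℝ => f ξ (t + k)) (ft ξ) 0 := by
        simpa [Function.comp_def] using hb.comp 0 hshift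
      exact h1.sub h2
    have hGslope := hasDerivAt_iff_tendsto_slope.1 hG
    have habs : Tendsto (fun k => |slope G 0 k - ftx ξ t * h|) (nhdsWithin 0 {(0:ℝ)}ᶜ)
        (nhds (|ft (ξ + h) - ft ξ - ftx ξ t * h|)) :=
      ((hGslope.sub_const _).abs)
    refine le_of_tendsto habs ?_
    have hev : {(0:ℝ)}ᶜ ∩ Set.Ioo (-r) r ∈ nhdsWithin 0 {(0:ℝ)}ᶜ :=
      inter_mem_nhdsWithin _ (Ioo_mem_nhds (by linarith : -r < (0:ℝ)) hr)
    filter_upwards [hev] with k hk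
    obtain ⟨hk0, hkIoo⟩ := hk
    have hk0' : k ≠ 0 := hk0
    have hkr : |k| < r := abs_lt.2 ⟨hkIoo.1, hkIoo.2⟩
    have htk : t + k ∈ Set.Ioo (t - δ) (t + δ) := by
      have := abs_lt.1 (lt_of_lt_of_le hkr hrδ)
      constructor <;> linarith [this.1, this.2]
    -- MVT in x on φ x = f x (t+k) - f x t
    obtain ⟨c, hc, hceq⟩ := mvt_uIcc (fun x => f x (t + k) - f x t)
      (fun x => fx x (t + k) - fx x t) ξ (ξ + h)
      (fun x _ => (hx x (t + k) htk).sub (hx x t htmem))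
    -- MVT in time on σ ↦ fx c σ
    obtain ⟨τ, hτ, hτeq⟩ := mvt_uIcc (fun σ => fx c σ) (fun σ => ftx c σ) t (t + k)
      (fun σ hσ => htd c σ (by
        have h1 := Real.dist_le_of_mem_uIcc hσ (Set.left_mem_uIcc)
        have h2 : dist t (t + k) = |k| := by
          rw [Real.dist_eq]; simp [abs_sub_comm]
        rw [Real.dist_eq, h2] at h1
        have h3 : |σ - t| < δ := lt_of_le_of_lt h1 (lt_of_lt_of_le hkr hrδ)
        have := abs_lt.1 h3
        constructor <;> linarith [this.1, this.2]))
    have hGk : G k - G 0 = ftx c τ * k * h := by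
      have : G k - G 0 = (f (ξ + h) (t + k) - f (ξ + h) t) - (f ξ (t + k) - f ξ t) := by
        simp only [hGdef]; ring
      rw [this]
      have hceq' : (f (ξ + h) (t + k) - f (ξ + h) t) - (f ξ (t + k) - f ξ t)
          = (fx c (t + k) - fx c t) * h := by
        have := hceq; simpa [add_sub_cancel_left] using this
      rw [hceq']
      have hτeq' : fx c (t + k) - fx c t = ftx c τ * k := by
        simpa [add_sub_cancel_left] using hτeq
      rw [hτeq']
    have hslope : slope G 0 k = ftx c τ * h := by
      rw [slope_def_field]
      rw [show G k - G 0 = ftx c τ * k * h from hGk]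
      field_simp
      ring
    rw [hslope]
    have hdist : dist ((c, τ) : ℝ × ℝ) ((ξ, t) : ℝ × ℝ) < r' := by
      rw [Prod.dist_eq]
      have hdc : dist c ξ ≤ |h| := by
        have := Real.dist_le_of_mem_uIcc hc (Set.left_mem_uIcc)
        have h2 : dist ξ (ξ + h) = |h| := by rw [Real.dist_eq]; simp [abs_sub_comm]
        rwa [h2] at this
      have hdτ : dist τ t ≤ |k| := by
        have := Real.dist_le_of_mem_uIcc hτ (Set.left_mem_uIcc)
        have h2 : dist t (t + k) = |k| := by rw [Real.dist_eq]; simp [abs_sub_comm]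
        rwa [h2] at this
      exact max_lt (lt_of_le_of_lt hdc (lt_of_lt_of_le hhr hrr'))
        (lt_of_le_of_lt hdτ (lt_of_lt_of_le hkr hrr'))
    have := hcont' hdist
    rw [Real.dist_eq] at this
    calc |ftx c τ * h - ftx ξ t * h| = |ftx c τ - ftx ξ t| * |h| := by
          rw [← abs_mul]; ring_nf
      _ ≤ ε * |h| := by
          apply mul_le_mul_of_nonneg_right (le_of_lt this) (abs_nonneg _)
  -- conclude
  have hAslope := hasDerivAt_iff_tendsto_slope.1 hA
  have habs2 : Tendsto (fun x => |slope ft ξ x - ftx ξ t|) (nhdsWithin ξ {ξ}ᶜ)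
      (nhds (|A - ftx ξ t|)) := (hAslope.sub_const _).abs
  have hfin : |A - ftx ξ t| ≤ ε := by
    refine le_of_tendsto habs2 ?_
    have hev : {ξ}ᶜ ∩ Set.Ioo (ξ - r) (ξ + r) ∈ nhdsWithin ξ {ξ}ᶜ :=
      inter_mem_nhdsWithin _ (Ioo_mem_nhds (by linarith : ξ - r < ξ) (by linarith : ξ < ξ + r))
    filter_upwards [hev] with x hx'
    obtain ⟨hx0, hxIoo⟩ := hx'
    set h := x - ξ with hhdef
    have hh : h ≠ 0 := sub_ne_zero.2 hx0
    have hhr : |h| < r := abs_lt.2 ⟨by simp [hhdef]; linarith [hxIoo.1], by simp [hhdef]; linarith [hxIoo.2]⟩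
    have := key h hh hhr
    have hslope2 : slope ft ξ x - ftx ξ t = (ft (ξ + h) - ft ξ - ftx ξ t * h) / h := by
      rw [slope_def_field]
      have : ξ + h = x := by simp [hhdef]
      rw [this]
      field_simp [hhdef]
      rw [← hhdef]; field_simp
    rw [hslope2, abs_div]
    rw [div_le_iff₀ (abs_pos.2 hh)]
    linarith [key h hh hhr]
  rw [hεdef] at hfin
  have : |A - ftx ξ t| > 0 := abs_pos.2 (sub_ne_zero.2 hne)
  linarith
lemma locLip_ae_deriv (m : ℝ → ℝ) (T : ℝ) (hT : 0 < T)
    (h : ∀ b : ℝ, b < T → ∃ L : NNReal, LipschitzOnWith L m (Set.Icc 0 b)) :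
    ∀ᵐ t ∂(volume : Measure ℝ), t ∈ Set.Ioo 0 T → ∃ d, HasDerivAt m d t := by
  have hchoice : ∀ n : ℕ, ∃ g : ℝ → ℝ, (∃ L : NNReal, LipschitzWith L g) ∧
      Set.EqOn m g (Set.Icc 0 (T - T/(n+2))) := by
    intro n
    have hpos : 0 < T/((n:ℝ)+2) := by positivity
    obtain ⟨L, hL⟩ := h (T - T/(n+2)) (by linarith)
    obtain ⟨g, hg, heq⟩ := hL.extend_real
    exact ⟨g, ⟨L, hg⟩, heq⟩
  choose g hg heq using hchoice
  have hae : ∀ᵐ t ∂(volume : Measure ℝ), ∀ n, DifferentiableAt ℝ (g n) t := by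
    rw [MeasureTheory.ae_all_iff]
    intro n
    obtain ⟨L, hL⟩ := hg n
    exact hL.ae_differentiableAt
  filter_upwards [hae] with t hdiff htIoo
  obtain ⟨n, hn⟩ : ∃ n : ℕ, T/((n:ℝ)+2) < T - t := by
    obtain ⟨n, hn⟩ := exists_nat_gt (T/(T - t))
    refine ⟨n, ?_⟩
    have h1 : 0 < T - t := by linarith [htIoo.2]
    rw [div_lt_iff₀ (by positivity : (0:ℝ) < (n:ℝ)+2)]
    have h2 := (div_lt_iff₀ h1).1 hn
    nlinarith
  have hb : t ∈ Set.Ioo (0:ℝ) (T - T/((n:ℝ)+2)) := ⟨htIoo.1, by linarith⟩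
  have hopen : Set.Ioo (0:ℝ) (T - T/((n:ℝ)+2)) ∈ nhds t := Ioo_mem_nhds hb.1 hb.2
  have hev : m =ᶠ[nhds t] g n := by
    filter_upwards [hopen] with s hs
    exact heq n (Set.mem_Icc.2 ⟨hs.1.le, hs.2.le⟩)
  exact ⟨deriv (g n) t, ((hdiff n).hasDerivAt).congr_of_eventuallyEq hev⟩

end FWHelpers

/-- A classical periodic solution of the Fornberg–Whitham equation on `ℝ × [0,T)`:
`u` is 1-periodic in `x`, has continuous partial derivatives `ux = ∂ₓ u` and
`ut = ∂ₜ u` on `ℝ × [0,T)`, and satisfies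
`∂ₜ u + (3/2) u ∂ₓ u = ∫_0^1 K(y) ∂ₓ u(x - y, t) dy`. -/
def IsClassicalFWSolution (T : ℝ) (u ux ut : ℝ → ℝ → ℝ) : Prop :=
  ContinuousOn (fun p : ℝ × ℝ => u p.1 p.2) (Set.univ ×ˢ Set.Ico 0 T) ∧
  (∀ x : ℝ, ∀ t ∈ Set.Ico (0 : ℝ) T, u (x + 1) t = u x t) ∧
  (∀ x : ℝ, ∀ t ∈ Set.Ico (0 : ℝ) T, HasDerivAt (fun x' => u x' t) (ux x t) x) ∧
  (∀ x : ℝ, ∀ t ∈ Set.Ico (0 : ℝ) T,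
    HasDerivWithinAt (fun t' => u x t') (ut x t) (Set.Ico 0 T) t) ∧
  ContinuousOn (fun p : ℝ × ℝ => ux p.1 p.2) (Set.univ ×ˢ Set.Ico 0 T) ∧
  ContinuousOn (fun p : ℝ × ℝ => ut p.1 p.2) (Set.univ ×ˢ Set.Ico 0 T) ∧
  (∀ x : ℝ, ∀ t ∈ Set.Ico (0 : ℝ) T,
    ut x t + (3 / 2) * u x t * ux x t = ∫ y in (0:ℝ)..1, FWKernel y * ux (x - y) t)

/-- For a classical periodic Fornberg–Whitham solution with continuous `∂ₓ²u` and
`∂ₜ∂ₓu`, the extrema `m₁(t) = min ∂ₓu(·,t)` and `m₂(t) = max ∂ₓu(·,t)` are locally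
Lipschitz and satisfy, almost everywhere,
`m₁' ≤ -(3/2)m₁² + (m₂ - m₁)/2` and `m₂' ≤ -(3/2)m₂² + (m₂ - m₁)/2`. -/
theorem fw_extrema_differential_inequalities (T : ℝ) (hT : 0 < T)
    (u ux ut uxx utx : ℝ → ℝ → ℝ)
    (hu : IsClassicalFWSolution T u ux ut)
    (huxx : ∀ x : ℝ, ∀ t ∈ Set.Ico (0 : ℝ) T,
      HasDerivAt (fun x' => ux x' t) (uxx x t) x)
    (hutx : ∀ x : ℝ, ∀ t ∈ Set.Ico (0 : ℝ) T,
      HasDerivWithinAt (fun t' => ux x t') (utx x t) (Set.Ico 0 T) t)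
    (huxxc : ContinuousOn (fun p : ℝ × ℝ => uxx p.1 p.2) (Set.univ ×ˢ Set.Ico 0 T))
    (hutxc : ContinuousOn (fun p : ℝ × ℝ => utx p.1 p.2) (Set.univ ×ˢ Set.Ico 0 T))
    (m₁ m₂ : ℝ → ℝ)
    (hm₁ : ∀ t : ℝ, m₁ t = sInf ((fun x => ux x t) '' Set.Icc (0 : ℝ) 1))
    (hm₂ : ∀ t : ℝ, m₂ t = sSup ((fun x => ux x t) '' Set.Icc (0 : ℝ) 1)) :
    (∀ b : ℝ, b < T → ∃ L : NNReal, LipschitzOnWith L m₁ (Set.Icc 0 b)) ∧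
    (∀ b : ℝ, b < T → ∃ L : NNReal, LipschitzOnWith L m₂ (Set.Icc 0 b)) ∧
    (∀ᵐ t ∂(volume : Measure ℝ), t ∈ Set.Ioo (0 : ℝ) T →
      ∃ d₁ d₂ : ℝ, HasDerivAt m₁ d₁ t ∧ HasDerivAt m₂ d₂ t ∧
        d₁ ≤ -(3 / 2) * (m₁ t) ^ 2 + (m₂ t - m₁ t) / 2 ∧
        d₂ ≤ -(3 / 2) * (m₂ t) ^ 2 + (m₂ t - m₁ t) / 2) := by
  obtain ⟨huc, hperi, hux, hut, huxc, hutc, heqn⟩ := hu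
  -- continuity of slices
  have contx : ∀ t ∈ Set.Ico (0:ℝ) T, Continuous fun x => ux x t := fun t ht =>
    continuous_iff_continuousAt.2 fun x => (huxx x t ht).continuousAt
  have contxx : ∀ t ∈ Set.Ico (0:ℝ) T, Continuous fun x => uxx x t := by
    intro t ht
    have h1 : ContinuousOn (fun x : ℝ => uxx x t) Set.univ := by
      have := huxxc.comp ((continuous_id.prodMk continuous_const).continuousOn
        (s := Set.univ)) (fun x _ => (⟨trivial, ht⟩ : (x, t) ∈ Set.univ ×ˢ Set.Ico 0 T))
      exact this
    rwa [continuousOn_univ] at h1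
  -- periodicity of ux
  have ux_per : ∀ t ∈ Set.Ico (0:ℝ) T, Function.Periodic (fun x => ux x t) 1 := by
    intro t ht x
    have h1 := hux (x + 1) t ht
    have h2 : HasDerivAt (fun x' => u (x' + 1) t) (ux (x + 1) t) x := by
      have := h1.comp x ((hasDerivAt_id x).add_const 1)
      simpa [Function.comp_def] using this
    have h3 : (fun x' => u (x' + 1) t) = fun x' => u x' t := funext fun x' => hperi x' t ht
    rw [h3] at h2
    exact h2.unique (hux x t ht)
  have hred : ∀ t ∈ Set.Ico (0:ℝ) T, ∀ x : ℝ, ∃ x' ∈ Set.Icc (0:ℝ) 1, ux x' t = ux x t := by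
    intro t ht x
    refine ⟨Int.fract x, ⟨Int.fract_nonneg x, (Int.fract_lt_one x).le⟩, ?_⟩
    have h4 := (ux_per t ht).sub_int_mul_eq (x := x) ⌊x⌋
    have h5 : Int.fract x = x - ⌊x⌋ * 1 := by rw [Int.fract]; ring
    rw [h5]
    exact h4
  have hnimg : ∀ t : ℝ, ((fun x => ux x t) '' Set.Icc (0:ℝ) 1).Nonempty :=
    fun t => (Set.nonempty_Icc.2 zero_le_one).image _
  have hlow : ∀ t ∈ Set.Ico (0:ℝ) T, ∀ x : ℝ, m₁ t ≤ ux x t := by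
    intro t ht x
    obtain ⟨x', hx', hx'eq⟩ := hred t ht x
    rw [hm₁ t, ← hx'eq]
    exact csInf_le (isCompact_Icc.image (contx t ht)).bddBelow ⟨x', hx', rfl⟩
  have hhigh : ∀ t ∈ Set.Ico (0:ℝ) T, ∀ x : ℝ, ux x t ≤ m₂ t := by
    intro t ht x
    obtain ⟨x', hx', hx'eq⟩ := hred t ht x
    rw [hm₂ t, ← hx'eq]
    exact le_csSup (isCompact_Icc.image (contx t ht)).bddAbove ⟨x', hx', rfl⟩
  have hminat : ∀ t ∈ Set.Ico (0:ℝ) T, ∃ ξ ∈ Set.Icc (0:ℝ) 1, ux ξ t = m₁ t := by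
    intro t ht
    obtain ⟨ξ, hξmem, hξ⟩ := isCompact_Icc.exists_isMinOn (Set.nonempty_Icc.2 zero_le_one)
      (contx t ht).continuousOn
    refine ⟨ξ, hξmem, ?_⟩
    rw [hm₁ t]
    refine le_antisymm (le_csInf (hnimg t) ?_)
      (csInf_le (isCompact_Icc.image (contx t ht)).bddBelow ⟨ξ, hξmem, rfl⟩)
    rintro b ⟨x, hx, rfl⟩
    exact hξ hx
  have hmaxat : ∀ t ∈ Set.Ico (0:ℝ) T, ∃ η ∈ Set.Icc (0:ℝ) 1, ux η t = m₂ t := by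
    intro t ht
    obtain ⟨η, hηmem, hη⟩ := isCompact_Icc.exists_isMaxOn (Set.nonempty_Icc.2 zero_le_one)
      (contx t ht).continuousOn
    refine ⟨η, hηmem, ?_⟩
    rw [hm₂ t]
    refine le_antisymm
      (le_csSup (isCompact_Icc.image (contx t ht)).bddAbove ⟨η, hηmem, rfl⟩)
      (csSup_le (hnimg t) ?_)
    rintro b ⟨x, hx, rfl⟩
    exact hη hx
  have hm12 : ∀ t ∈ Set.Ico (0:ℝ) T, m₁ t ≤ m₂ t := by
    intro t ht
    obtain ⟨ξ, _, hξ⟩ := hminat t ht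
    rw [← hξ]
    exact hhigh t ht ξ
  -- Lipschitz continuity on [0, b]
  have hlip : ∀ b : ℝ, b < T →
      ∃ L : NNReal, LipschitzOnWith L m₁ (Set.Icc 0 b) ∧ LipschitzOnWith L m₂ (Set.Icc 0 b) := by
    intro b hb
    rcases lt_or_ge b 0 with hb0 | hb0
    · refine ⟨1, ?_, ?_⟩ <;>
      · rw [Set.Icc_eq_empty (by linarith)]
        exact lipschitzOnWith_empty _ _
    have hsub : Set.Icc (0:ℝ) b ⊆ Set.Ico 0 T := fun τ hτ => ⟨hτ.1, lt_of_le_of_lt hτ.2 hb⟩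
    have hK : IsCompact ((Set.Icc (0:ℝ) 1) ×ˢ (Set.Icc (0:ℝ) b)) := isCompact_Icc.prod isCompact_Icc
    obtain ⟨M, hM⟩ := hK.exists_bound_of_continuousOn
      (hutxc.mono (fun p hp => ⟨trivial, hsub hp.2⟩))
    have hM0 : 0 ≤ M := le_trans (norm_nonneg _)
      (hM (0, 0) ⟨⟨le_refl _, zero_le_one⟩, ⟨le_refl _, hb0⟩⟩)
    have hux_lip : ∀ x ∈ Set.Icc (0:ℝ) 1, ∀ s ∈ Set.Icc (0:ℝ) b, ∀ τ ∈ Set.Icc (0:ℝ) b,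
        |ux x τ - ux x s| ≤ M * |τ - s| := by
      intro x hx s hs τ hτ
      have := Convex.norm_image_sub_le_of_norm_hasDerivWithin_le
        (f := fun σ => ux x σ) (f' := fun σ => utx x σ) (s := Set.Icc (0:ℝ) b)
        (fun σ hσ => (hutx x σ (hsub hσ)).mono hsub)
        (fun σ hσ => hM (x, σ) ⟨hx, hσ⟩) (convex_Icc (0:ℝ) b) hs hτ
      simpa [Real.norm_eq_abs] using this
    have key₁ : ∀ s ∈ Set.Icc (0:ℝ) b, ∀ τ ∈ Set.Icc (0:ℝ) b, m₁ s ≤ m₁ τ + M * |s - τ| := by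
      intro s hs τ hτ
      have hlb : ∀ z ∈ ((fun x => ux x τ) '' Set.Icc (0:ℝ) 1), m₁ s - M * |s - τ| ≤ z := by
        rintro z ⟨x, hx, rfl⟩
        have h1 := hlow s (hsub hs) x
        have h2 := hux_lip x hx τ hτ s hs
        have h3 := abs_le.1 h2
        linarith [h3.1, h3.2]
      have := le_csInf (hnimg τ) hlb
      rw [← hm₁ τ] at this
      linarith
    have key₂ : ∀ s ∈ Set.Icc (0:ℝ) b, ∀ τ ∈ Set.Icc (0:ℝ) b, m₂ s ≤ m₂ τ + M * |s - τ| := by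
      intro s hs τ hτ
      have hub : ∀ z ∈ ((fun x => ux x s) '' Set.Icc (0:ℝ) 1), z ≤ m₂ τ + M * |s - τ| := by
        rintro z ⟨x, hx, rfl⟩
        have h1 := hhigh τ (hsub hτ) x
        have h2 := hux_lip x hx s hs τ hτ
        have h3 := abs_le.1 h2
        have h4 : |τ - s| = |s - τ| := abs_sub_comm τ s
        rw [h4] at h3
        linarith [h3.1, h3.2]
      have := csSup_le (hnimg s) hub
      rw [← hm₂ s] at this
      linarith
    refine ⟨Real.toNNReal M, ?_, ?_⟩ <;> rw [lipschitzOnWith_iff_dist_le_mul] <;>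
      intro s hs τ hτ <;>
      rw [Real.dist_eq, Real.dist_eq, Real.coe_toNNReal M hM0] <;>
      rw [abs_sub_le_iff]
    · constructor
      · linarith [key₁ s hs τ hτ]
      · have h5 := key₁ τ hτ s hs
        rw [abs_sub_comm τ s] at h5
        linarith
    · constructor
      · linarith [key₂ s hs τ hτ]
      · have h5 := key₂ τ hτ s hs
        rw [abs_sub_comm τ s] at h5
        linarith
  -- Main identity for utx at spatial critical points
  have hmain : ∀ t ∈ Set.Ioo (0:ℝ) T, ∀ x₀ : ℝ, uxx x₀ t = 0 →
      utx x₀ t = (∫ y in (0:ℝ)..1, FWKernel' y * ux (x₀ - y) t) - (3/2) * (ux x₀ t)^2 := by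
    intro t ht x₀ hx₀
    have ht' : t ∈ Set.Ico 0 T := ⟨ht.1.le, ht.2⟩
    have cx : Continuous fun x => ux x t := contx t ht'
    have cxx : Continuous fun x => uxx x t := contxx t ht'
    -- derivative of the convolution term
    have hF' : ∀ x : ℝ, HasDerivAt (fun x' => ∫ y in (0:ℝ)..1, FWKernel y * ux (x' - y) t)
        (∫ y in (0:ℝ)..1, FWKernel y * uxx (x - y) t) x := by
      intro x
      obtain ⟨CK, hCK⟩ := (isCompact_Icc (a := (0:ℝ)) (b := 1)).exists_bound_of_continuousOn
        fwKernel_continuous.continuousOn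
      obtain ⟨CU, hCU⟩ := (isCompact_Icc (a := x - 2) (b := x + 1)).exists_bound_of_continuousOn
        cxx.continuousOn
      have hCK0 : 0 ≤ CK := le_trans (norm_nonneg _) (hCK 0 ⟨le_refl _, zero_le_one⟩)
      refine (intervalIntegral.hasDerivAt_integral_of_dominated_loc_of_deriv_le
        (F := fun x' y => FWKernel y * ux (x' - y) t)
        (F' := fun x' y => FWKernel y * uxx (x' - y) t)
        (bound := fun _ => CK * CU) (a := 0) (b := 1) (x₀ := x) (s := Metric.ball x 1)
        (Metric.ball_mem_nhds x one_pos) ?_ ?_ ?_ ?_ ?_ ?_).2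
      · exact Filter.Eventually.of_forall fun x' =>
          (fwKernel_continuous.mul (cx.comp (continuous_const.sub continuous_id))).aestronglyMeasurable
      · exact (fwKernel_continuous.mul (cx.comp (continuous_const.sub continuous_id))).intervalIntegrable 0 1
      · exact (fwKernel_continuous.mul (cxx.comp (continuous_const.sub continuous_id))).aestronglyMeasurable
      · refine MeasureTheory.ae_of_all _ fun y hy x' hx' => ?_
        have hy' : y ∈ Set.Icc (0:ℝ) 1 := by
          rw [Set.uIoc_of_le zero_le_one] at hy
          exact ⟨hy.1.le, hy.2⟩
        have hx'' : |x' - x| < 1 := by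
          have := Metric.mem_ball.1 hx'
          rwa [Real.dist_eq] at this
        have hmem : x' - y ∈ Set.Icc (x - 2) (x + 1) := by
          have h1 := abs_lt.1 hx''
          constructor <;> [linarith [h1.1, hy'.2]; linarith [h1.2, hy'.1]]
        rw [norm_mul]
        exact mul_le_mul (hCK y hy') (hCU (x' - y) hmem) (norm_nonneg _) hCK0
      · exact intervalIntegrable_const
      · refine MeasureTheory.ae_of_all _ fun y hy x' hx' => ?_
        have h1 : HasDerivAt (fun x'' => ux (x'' - y) t) (uxx (x' - y) t) x' := by
          have := (huxx (x' - y) t ht').comp x' ((hasDerivAt_id x').sub_const y)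
          simpa [Function.comp_def] using this
        exact h1.const_mul (FWKernel y)
    -- integration by parts
    have hparts : ∀ x : ℝ, (∫ y in (0:ℝ)..1, FWKernel y * uxx (x - y) t)
        = ∫ y in (0:ℝ)..1, FWKernel' y * ux (x - y) t := by
      intro x
      have hv : ∀ y : ℝ, HasDerivAt (fun y' => ux (x - y') t) (-uxx (x - y) t) y := by
        intro y
        have := (huxx (x - y) t ht').comp y ((hasDerivAt_id y).const_sub x)
        simpa [Function.comp_def] using this
      have hibp := intervalIntegral.integral_mul_deriv_eq_deriv_mul_of_hasDerivAt
        (u := FWKernel) (v := fun y => ux (x - y) t)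
        (u' := FWKernel') (v' := fun y => -uxx (x - y) t) (a := 0) (b := 1)
        fwKernel_continuous.continuousOn
        ((cx.comp (continuous_const.sub continuous_id)).continuousOn)
        (fun z _ => fwKernel_hasDerivAt z) (fun z _ => hv z)
        (fwKernel'_continuous.intervalIntegrable 0 1)
        (((cxx.comp (continuous_const.sub continuous_id)).neg).intervalIntegrable 0 1)
      simp only [mul_neg] at hibp
      rw [intervalIntegral.integral_neg] at hibp
      have hper1 : ux (x - 1) t = ux x t := by
        have h6 := (ux_per t ht') (x - 1)
        simp only [sub_add_cancel] at h6
        exact h6.symm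
      simp only [sub_zero] at hibp
      rw [hper1, fwKernel_one_eq_zero] at hibp
      linarith
    -- x-derivative of ut
    have hutd : HasDerivAt (fun x => ut x t)
        ((∫ y in (0:ℝ)..1, FWKernel' y * ux (x₀ - y) t)
          - (3/2) * (ux x₀ t * ux x₀ t + u x₀ t * uxx x₀ t)) x₀ := by
      have hfe : (fun x => ut x t)
          = fun x => (∫ y in (0:ℝ)..1, FWKernel y * ux (x - y) t) - (3/2) * (u x t * ux x t) :=
        funext fun x => by linarith [heqn x t ht']
      rw [hfe]
      have h2 : HasDerivAt (fun x => u x t * ux x t)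
          (ux x₀ t * ux x₀ t + u x₀ t * uxx x₀ t) x₀ := (hux x₀ t ht').mul (huxx x₀ t ht')
      have h3 := (hF' x₀).sub (h2.const_mul (3/2))
      rw [hparts x₀] at h3
      exact h3
    -- Schwarz symmetry of mixed partials
    set δ := min t (T - t) with hδdef
    have hδ : 0 < δ := lt_min ht.1 (by linarith [ht.2])
    have hδ1 : δ ≤ t := min_le_left _ _
    have hδ2 : δ ≤ T - t := min_le_right _ _
    have hsub2 : ∀ s ∈ Set.Ioo (t - δ) (t + δ), s ∈ Set.Ico 0 T ∧ 0 < s ∧ s < T := by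
      intro s hs
      have h1 : 0 ≤ t - δ := by linarith
      have h2 : t + δ ≤ T := by linarith
      exact ⟨⟨by linarith [hs.1], by linarith [hs.2]⟩, by linarith [hs.1], by linarith [hs.2]⟩
    have hsch := schwarz_mixed (f := u) (fx := ux) (ftx := utx) (ft := fun x => ut x t)
      (ξ := x₀) (t := t) hδ
      (fun x s hs => hux x s (hsub2 s hs).1)
      (fun x s hs => (hutx x s (hsub2 s hs).1).hasDerivAt
        (Ico_mem_nhds (hsub2 s hs).2.1 (hsub2 s hs).2.2))
      (hutxc.continuousAt (prod_mem_nhds Filter.univ_mem (Ico_mem_nhds ht.1 ht.2)))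
      (fun x => (hut x t ht').hasDerivAt (Ico_mem_nhds ht.1 ht.2))
      hutd
    rw [← hsch, hx₀]
    ring
  -- bound on the convolution-derivative integral
  have hintb : ∀ t ∈ Set.Ioo (0:ℝ) T, ∀ x₀ : ℝ,
      (∫ y in (0:ℝ)..1, FWKernel' y * ux (x₀ - y) t) ≤ (m₂ t - m₁ t) / 2 := by
    intro t ht x₀
    have ht' : t ∈ Set.Ico 0 T := ⟨ht.1.le, ht.2⟩
    have cx : Continuous fun x => ux x t := contx t ht'
    have hcont1 : Continuous fun y => FWKernel' y * ux (x₀ - y) t :=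
      fwKernel'_continuous.mul (cx.comp (continuous_const.sub continuous_id))
    have hint : ∀ a b : ℝ, IntervalIntegrable (fun y => FWKernel' y * ux (x₀ - y) t) volume a b :=
      fun a b => hcont1.intervalIntegrable a b
    have hsplit : (∫ y in (0:ℝ)..1, FWKernel' y * ux (x₀ - y) t)
        = (∫ y in (0:ℝ)..(1/2), FWKernel' y * ux (x₀ - y) t)
          + ∫ y in (1/2:ℝ)..1, FWKernel' y * ux (x₀ - y) t :=
      (intervalIntegral.integral_add_adjacent_intervals (hint 0 (1/2)) (hint (1/2) 1)).symm
    have hFTC : ∀ a b : ℝ, (∫ y in a..b, FWKernel' y) = FWKernel b - FWKernel a := fun a b =>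
      intervalIntegral.integral_eq_sub_of_hasDerivAt (fun z _ => fwKernel_hasDerivAt z)
        (fwKernel'_continuous.intervalIntegrable a b)
    have h1 : (∫ y in (0:ℝ)..(1/2), FWKernel' y * ux (x₀ - y) t)
        ≤ (FWKernel (1/2) - FWKernel 0) * m₁ t := by
      have hmono := intervalIntegral.integral_mono_on (by norm_num : (0:ℝ) ≤ 1/2)
        (hint 0 (1/2))
        ((fwKernel'_continuous.mul continuous_const).intervalIntegrable 0 (1/2))
        (fun y hy => mul_le_mul_of_nonpos_left (hlow t ht' (x₀ - y)) (fwKernel'_nonpos hy.2))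
      calc (∫ y in (0:ℝ)..(1/2), FWKernel' y * ux (x₀ - y) t)
          ≤ ∫ y in (0:ℝ)..(1/2), FWKernel' y * m₁ t := hmono
        _ = (∫ y in (0:ℝ)..(1/2), FWKernel' y) * m₁ t :=
            intervalIntegral.integral_mul_const _ _
        _ = (FWKernel (1/2) - FWKernel 0) * m₁ t := by rw [hFTC]
    have h2 : (∫ y in (1/2:ℝ)..1, FWKernel' y * ux (x₀ - y) t)
        ≤ (FWKernel 1 - FWKernel (1/2)) * m₂ t := by
      have hmono := intervalIntegral.integral_mono_on (by norm_num : (1/2:ℝ) ≤ 1)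
        (hint (1/2) 1)
        ((fwKernel'_continuous.mul continuous_const).intervalIntegrable (1/2) 1)
        (fun y hy => mul_le_mul_of_nonneg_left (hhigh t ht' (x₀ - y)) (fwKernel'_nonneg hy.1))
      calc (∫ y in (1/2:ℝ)..1, FWKernel' y * ux (x₀ - y) t)
          ≤ ∫ y in (1/2:ℝ)..1, FWKernel' y * m₂ t := hmono
        _ = (∫ y in (1/2:ℝ)..1, FWKernel' y) * m₂ t :=
            intervalIntegral.integral_mul_const _ _
        _ = (FWKernel 1 - FWKernel (1/2)) * m₂ t := by rw [hFTC]
    have hc1 := fwKernel_c_nonneg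
    have hc2 := fwKernel_c_le_half
    have hK01 := fwKernel_one_eq_zero
    have h12 := hm12 t ht'
    rw [hsplit]
    rw [← hK01] at h1
    nlinarith [h1, h2, mul_nonneg (by linarith : (0:ℝ) ≤ 1/2 - (FWKernel 1 - FWKernel (1/2)))
      (by linarith : (0:ℝ) ≤ m₂ t - m₁ t)]
  -- assemble
  have hae₁ := locLip_ae_deriv m₁ T hT (fun b hb => ⟨(hlip b hb).choose, (hlip b hb).choose_spec.1⟩)
  have hae₂ := locLip_ae_deriv m₂ T hT (fun b hb => ⟨(hlip b hb).choose, (hlip b hb).choose_spec.2⟩)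
  refine ⟨fun b hb => ⟨(hlip b hb).choose, (hlip b hb).choose_spec.1⟩,
    fun b hb => ⟨(hlip b hb).choose, (hlip b hb).choose_spec.2⟩, ?_⟩
  filter_upwards [hae₁, hae₂] with t h1 h2 ht
  obtain ⟨d₁, hd₁⟩ := h1 ht
  obtain ⟨d₂, hd₂⟩ := h2 ht
  have ht' : t ∈ Set.Ico 0 T := ⟨ht.1.le, ht.2⟩
  obtain ⟨ξ, hξmem, hξ⟩ := hminat t ht'
  obtain ⟨η, hηmem, hη⟩ := hmaxat t ht'
  have hIcoNhds : Set.Ico (0:ℝ) T ∈ nhds t := Ico_mem_nhds ht.1 ht.2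
  -- envelope comparison, min from the right
  have hd₁le : d₁ ≤ utx ξ t := by
    have hφ : HasDerivAt (fun s => ux ξ s - m₁ s) (utx ξ t - d₁) t :=
      ((hutx ξ t ht').hasDerivAt hIcoNhds).sub hd₁
    have h0 : ux ξ t - m₁ t = 0 := by rw [hξ]; ring
    have hev : ∀ᶠ s in nhdsWithin t (Set.Ioi t), 0 ≤ ux ξ s - m₁ s := by
      filter_upwards [Ioo_mem_nhdsGT_of_mem (⟨le_refl t, ht.2⟩ : t ∈ Set.Ico t T)] with s hs
      have hs' : s ∈ Set.Ico 0 T := ⟨le_of_lt (lt_of_le_of_lt ht.1.le hs.1), hs.2⟩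
      linarith [hlow s hs' ξ]
    linarith [deriv_nonneg_of_right_nonneg hφ h0 hev]
  -- envelope comparison, max from the left
  have hd₂le : d₂ ≤ utx η t := by
    have hφ : HasDerivAt (fun s => ux η s - m₂ s) (utx η t - d₂) t :=
      ((hutx η t ht').hasDerivAt hIcoNhds).sub hd₂
    have h0 : ux η t - m₂ t = 0 := by rw [hη]; ring
    have hev : ∀ᶠ s in nhdsWithin t (Set.Iio t), ux η s - m₂ s ≤ 0 := by
      filter_upwards [Ioo_mem_nhdsLT_of_mem (⟨ht.1, le_refl t⟩ : t ∈ Set.Ioc 0 t)] with s hs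
      have hs' : s ∈ Set.Ico 0 T := ⟨hs.1.le, lt_trans hs.2 ht.2⟩
      linarith [hhigh s hs' η]
    linarith [deriv_nonneg_of_left_nonpos hφ h0 hev]
  -- vanishing of uxx at extrema
  have hξ0 : uxx ξ t = 0 := by
    have hloc : IsLocalMin (fun x => ux x t) ξ :=
      Filter.Eventually.of_forall fun x => by
        show ux ξ t ≤ ux x t
        rw [hξ]; exact hlow t ht' x
    exact hloc.hasDerivAt_eq_zero (huxx ξ t ht')
  have hη0 : uxx η t = 0 := by
    have hloc : IsLocalMax (fun x => ux x t) η :=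
      Filter.Eventually.of_forall fun x => by
        show ux x t ≤ ux η t
        rw [hη]; exact hhigh t ht' x
    exact hloc.hasDerivAt_eq_zero (huxx η t ht')
  refine ⟨d₁, d₂, hd₁, hd₂, ?_, ?_⟩
  · have h3 := hmain t ht ξ hξ0
    have h4 := hintb t ht ξ
    rw [hξ] at h3
    nlinarith [hd₁le, h3, h4]
  · have h3 := hmain t ht η hη0
    have h4 := hintb t ht η
    rw [hη] at h3
    nlinarith [hd₂le, h3, h4]
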